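/- Let Q₁, M₁, M₂ be n×n real symmetric positive semidefinite matrices, N₁, N₂ be n×n real symmetric positive definite matrices, and S₂ be an n×n real symmetric matrix with Q₁ ⪯ S₂. Suppose Q₁·M₁ = 0, (S₂ − Q₁)·M₂ = 0, and (Q₁+N₁)⁻¹ + M₁ = (Q₁+N₂)⁻¹ + M₂. Define Ñ := ((Q₁+N₁)⁻¹ + M₁)⁻¹ − Q₁. Then Ñ is symmetric positive definite, Ñ ⪯ N₁, Ñ ⪯ N₂, and (1/2)·log(det(S₂+Ñ)/det(Ñ)) − (1/2)·log(det(S₂+N₂)/det(N₂)) = (1/2)·log(det(Q₁+N₁)/det(N₁)) − (1/2)·log(det(Q₁+N₂)/det(N₂)). -/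

import Mathlib

open Matrix

private lemma conj_cancel {n : ℕ} {A X : Matrix (Fin n) (Fin n) ℝ}
    (hAu : IsUnit A.det) : A⁻¹ * (A * X * A) * A⁻¹ = X := by
  rw [Matrix.mul_assoc A X A, Matrix.nonsing_inv_mul_cancel_left A (X * A) hAu,
    Matrix.mul_assoc, Matrix.mul_nonsing_inv A hAu, Matrix.mul_one]

private lemma posDef_conj {n : ℕ} {A B : Matrix (Fin n) (Fin n) ℝ}
    (hA : A.PosDef) (hB : IsUnit B.det) : (Bᴴ * A * B).PosDef := by
  refine Matrix.PosDef.of_dotProduct_mulVec_pos (Matrix.isHermitian_conjTranspose_mul_mul B hA.1) fun x hx => ?_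
  have hBx : B *ᵥ x ≠ 0 := by
    intro h
    apply hx
    have hxeq : B⁻¹ *ᵥ (B *ᵥ x) = x := by
      rw [Matrix.mulVec_mulVec, Matrix.nonsing_inv_mul B hB, Matrix.one_mulVec]
    rw [← hxeq, h, Matrix.mulVec_zero]
  simpa only [star_mulVec, dotProduct_mulVec, vecMul_vecMul] using hA.dotProduct_mulVec_pos hBx

/-- core of the converse proof for Gaussian coding with fixed
mean, Eqs. (64)–(69) of the paper. Under `Q₁M₁ = 0`, `(S₂−Q₁)M₂ = 0` and the
enhanced-channel relation `(Q₁+N₁)⁻¹ + M₁ = (Q₁+N₂)⁻¹ + M₂`, the matrix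
`Ñ := ((Q₁+N₁)⁻¹ + M₁)⁻¹ − Q₁` is symmetric positive definite, satisfies
`Ñ ⪯ N₁`, `Ñ ⪯ N₂`, and the secrecy rates are preserved:
`½ log(det(S₂+Ñ)/det Ñ) − ½ log(det(S₂+N₂)/det N₂)
  = ½ log(det(Q₁+N₁)/det N₁) − ½ log(det(Q₁+N₂)/det N₂)`. -/
theorem stmt_9 {n : ℕ} (Q₁ M₁ M₂ N₁ N₂ S₂ Ntil : Matrix (Fin n) (Fin n) ℝ)
    (hQ₁ : Q₁.PosSemidef) (hM₁ : M₁.PosSemidef) (hM₂ : M₂.PosSemidef)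
    (hN₁ : N₁.PosDef) (hN₂ : N₂.PosDef)
    (hS₂ : S₂.IsHermitian) (hord : (S₂ - Q₁).PosSemidef)
    (hcs₁ : Q₁ * M₁ = 0) (hcs₂ : (S₂ - Q₁) * M₂ = 0)
    (hrel : (Q₁ + N₁)⁻¹ + M₁ = (Q₁ + N₂)⁻¹ + M₂)
    (hNtil : Ntil = ((Q₁ + N₁)⁻¹ + M₁)⁻¹ - Q₁) :
    Ntil.PosDef ∧ (N₁ - Ntil).PosSemidef ∧ (N₂ - Ntil).PosSemidef ∧
    (1/2) * Real.log ((S₂ + Ntil).det / Ntil.det)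
      - (1/2) * Real.log ((S₂ + N₂).det / N₂.det)
    = (1/2) * Real.log ((Q₁ + N₁).det / N₁.det)
      - (1/2) * Real.log ((Q₁ + N₂).det / N₂.det) := by
  set A : Matrix (Fin n) (Fin n) ℝ := (Q₁ + N₁)⁻¹ + M₁ with hAdef
  -- basic positive definiteness facts
  have hQN₁ : (Q₁ + N₁).PosDef := Matrix.PosDef.posSemidef_add hQ₁ hN₁
  have hQN₂ : (Q₁ + N₂).PosDef := Matrix.PosDef.posSemidef_add hQ₁ hN₂
  have hA : A.PosDef := hQN₁.inv.add_posSemidef hM₁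
  have hAu : IsUnit A.det := hA.det_pos.ne'.isUnit
  have hQN₁u : IsUnit (Q₁ + N₁).det := hQN₁.det_pos.ne'.isUnit
  have hQN₂u : IsUnit (Q₁ + N₂).det := hQN₂.det_pos.ne'.isUnit
  have hAinvu : IsUnit A⁻¹.det := hA.inv.det_pos.ne'.isUnit
  -- Hermitian facts
  have hAh : Aᴴ = A := by
    rw [hAdef, conjTranspose_add, hQN₁.isHermitian.inv.eq, hM₁.isHermitian.eq]
  have hAih : (A⁻¹)ᴴ = A⁻¹ := (hQN₁.inv.add_posSemidef hM₁).isHermitian.inv.eq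
  have hM₁Q₁ : M₁ * Q₁ = 0 := by
    have h := congrArg conjTranspose hcs₁
    rwa [conjTranspose_mul, hQ₁.isHermitian.eq, hM₁.isHermitian.eq,
      conjTranspose_zero] at h
  -- Q₁ + Ntil = A⁻¹
  have hQNt : Q₁ + Ntil = A⁻¹ := by rw [hNtil]; abel
  have hNtilA : Ntil = A⁻¹ - Q₁ := hNtil
  -- key algebraic identities
  have hNA : Ntil * A = 1 - Q₁ * (Q₁ + N₁)⁻¹ := by
    rw [hNtilA, sub_mul, Matrix.nonsing_inv_mul A hAu, hAdef, mul_add, hcs₁, add_zero]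
  have hid1 : Ntil * A * (Q₁ + N₁) = N₁ := by
    rw [hNA, sub_mul, one_mul, Matrix.mul_assoc,
      Matrix.nonsing_inv_mul _ hQN₁u, Matrix.mul_one, add_sub_cancel_left]
  have hid2 : (S₂ + Ntil) * A * (Q₁ + N₂) = S₂ + N₂ := by
    have hSA : (S₂ + Ntil) * A = (S₂ - Q₁) * (Q₁ + N₂)⁻¹ + 1 := by
      have : S₂ + Ntil = (S₂ - Q₁) + (Q₁ + Ntil) := by abel
      rw [this, add_mul, hQNt, Matrix.nonsing_inv_mul A hAu, hrel, mul_add,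
        hcs₂, add_zero]
    rw [hSA, add_mul, one_mul, Matrix.mul_assoc, Matrix.nonsing_inv_mul _ hQN₂u,
      Matrix.mul_one]
    abel
  -- A * Ntil * A is positive definite, hence so is Ntil
  have hAQA : A * Q₁ * A = (Q₁ + N₁)⁻¹ * Q₁ * (Q₁ + N₁)⁻¹ := by
    have h1 : A * Q₁ = (Q₁ + N₁)⁻¹ * Q₁ := by
      rw [hAdef, add_mul, hM₁Q₁, add_zero]
    have h2 : Q₁ * A = Q₁ * (Q₁ + N₁)⁻¹ := by
      rw [hAdef, mul_add, hcs₁, add_zero]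
    rw [h1, Matrix.mul_assoc, h2, ← Matrix.mul_assoc]
  have hmid : (Q₁ + N₁)⁻¹ * N₁ * (Q₁ + N₁)⁻¹
      = (Q₁ + N₁)⁻¹ - (Q₁ + N₁)⁻¹ * Q₁ * (Q₁ + N₁)⁻¹ := by
    nth_rewrite 2 [show N₁ = (Q₁ + N₁) - Q₁ from (add_sub_cancel_left Q₁ N₁).symm]
    rw [mul_sub, sub_mul, Matrix.nonsing_inv_mul _ hQN₁u, one_mul]
  have hANA : A * Ntil * A = (Q₁ + N₁)⁻¹ * N₁ * (Q₁ + N₁)⁻¹ + M₁ := by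
    rw [hNtilA, mul_sub, Matrix.mul_nonsing_inv A hAu, sub_mul, one_mul, hAQA,
      hmid, hAdef]
    abel
  have hBpd : ((Q₁ + N₁)⁻¹ * N₁ * (Q₁ + N₁)⁻¹ + M₁).PosDef := by
    have := posDef_conj hN₁ hQN₁.inv.det_pos.ne'.isUnit
    rw [hQN₁.isHermitian.inv.eq] at this
    exact this.add_posSemidef hM₁
  have hNtpd : Ntil.PosDef := by
    have h := posDef_conj hBpd hAinvu
    rw [hAih, ← hANA, conj_cancel hAu] at h
    exact h
  -- N₁ - Ntil and N₂ - Ntil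
  have hsub : ∀ (N M : Matrix (Fin n) (Fin n) ℝ), M.PosSemidef → (Q₁ + N).PosDef →
      A = (Q₁ + N)⁻¹ + M → (N - Ntil).PosSemidef := by
    intro N M hM hQN hAe
    have hQNu : IsUnit (Q₁ + N).det := hQN.det_pos.ne'.isUnit
    have hdiff : N - Ntil = (Q₁ + N) - A⁻¹ := by rw [hNtilA]; abel
    have hkey : A * (N - Ntil) * A = M + M * (Q₁ + N) * M := by
      have h1 : A * (Q₁ + N) = 1 + M * (Q₁ + N) := by
        rw [hAe, add_mul, Matrix.nonsing_inv_mul _ hQNu]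
      have h2 : M * (Q₁ + N) * A = M + M * (Q₁ + N) * M := by
        rw [hAe, mul_add, Matrix.mul_assoc M, Matrix.mul_nonsing_inv _ hQNu,
          Matrix.mul_one]
      rw [hdiff, mul_sub, sub_mul, Matrix.mul_nonsing_inv A hAu, one_mul, h1,
        add_mul, one_mul, h2]
      abel
    have hinner : (M + M * (Q₁ + N) * M).PosSemidef := by
      have hc : (Mᴴ * (Q₁ + N) * M).PosSemidef :=
        hQN.posSemidef.conjTranspose_mul_mul_same M
      rw [hM.isHermitian.eq] at hc
      exact hM.add hc
    have h := hinner.conjTranspose_mul_mul_same A⁻¹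
    rw [hAih, ← hkey, conj_cancel hAu] at h
    exact h
  have hNN₁ : (N₁ - Ntil).PosSemidef := hsub N₁ M₁ hM₁ hQN₁ rfl
  have hNN₂ : (N₂ - Ntil).PosSemidef := hsub N₂ M₂ hM₂ hQN₂ hrel
  -- determinant identities
  have hd1 : Ntil.det * A.det * (Q₁ + N₁).det = N₁.det := by
    rw [← det_mul, ← det_mul, hid1]
  have hd2 : (S₂ + Ntil).det * A.det * (Q₁ + N₂).det = (S₂ + N₂).det := by
    rw [← det_mul, ← det_mul, hid2]
  -- positivity of determinants
  have hSNt : (S₂ + Ntil).PosDef := by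
    have : S₂ + Ntil = (S₂ - Q₁) + (Q₁ + Ntil) := by abel
    rw [this, hQNt]
    exact Matrix.PosDef.posSemidef_add hord hA.inv
  have hSN₂ : (S₂ + N₂).PosDef := by
    have : S₂ + N₂ = (S₂ - Q₁) + (Q₁ + N₂) := by abel
    rw [this]
    exact Matrix.PosDef.posSemidef_add hord hQN₂
  have p1 := hNtpd.det_pos
  have p2 := hA.det_pos
  have p3 := hQN₁.det_pos
  have p4 := hQN₂.det_pos
  have p5 := hN₁.det_pos
  have p6 := hN₂.det_pos
  have p7 := hSNt.det_pos
  have p8 := hSN₂.det_pos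
  refine ⟨hNtpd, hNN₁, hNN₂, ?_⟩
  have l1 : Real.log N₁.det
      = Real.log Ntil.det + Real.log A.det + Real.log (Q₁ + N₁).det := by
    rw [← hd1, Real.log_mul (mul_pos p1 p2).ne' p3.ne', Real.log_mul p1.ne' p2.ne']
  have l2 : Real.log (S₂ + N₂).det
      = Real.log (S₂ + Ntil).det + Real.log A.det + Real.log (Q₁ + N₂).det := by
    rw [← hd2, Real.log_mul (mul_pos p7 p2).ne' p4.ne', Real.log_mul p7.ne' p2.ne']
  rw [Real.log_div p7.ne' p1.ne', Real.log_div p8.ne' p6.ne',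
    Real.log_div p3.ne' p5.ne', Real.log_div p4.ne' p6.ne']
  linarith
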